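/- Let S(x) = Σ_{i∈C₁} x^i over GF(q), where C₁ = P ∪ W₃ ∪ W₄ ∪ W₅. For t ∈ P, S(β^t) = -(n₁+1)/2 mod p, and for t ∈ Q, S(β^t) = (n₂-1)/2 mod p. -/

import Mathlib

/-- Sum of a periodic function over `range (a*b)`. -/
lemma sum_range_mul_of_periodic {M : Type*} [AddCommMonoid M] (f : ℕ → M) (b : ℕ)
    (hf : ∀ s, f (s + b) = f s) (a : ℕ) :
    ∑ s ∈ Finset.range (a * b), f s = a • ∑ s ∈ Finset.range b, f s := by
  have hshift : ∀ k i, f (i + k * b) = f i := by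
    intro k
    induction k with
    | zero => simp
    | succ k ih => intro i; rw [Nat.succ_mul, ← Nat.add_assoc, hf, ih]
  induction a with
  | zero => simp
  | succ a ih =>
    have h1 : (a + 1) * b = a * b + b := by ring
    have split : ∑ s ∈ Finset.range (a * b + b), f s =
        (∑ s ∈ Finset.range (a * b), f s) + ∑ i ∈ Finset.Ico (a * b) (a * b + b), f i := by
      simp only [Finset.range_eq_Ico]
      rw [Finset.sum_Ico_consecutive f (Nat.zero_le _) (Nat.le_add_right _ _)]
    rw [h1, split, ih, succ_nsmul]
    congr 1
    rw [Finset.sum_Ico_eq_sum_range]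
    have hab : a * b + b - a * b = b := by omega
    rw [hab]
    exact Finset.sum_congr rfl fun i _ => by rw [Nat.add_comm, hshift]

/-- Geometric sum over `Icc 1 (m-1)` for a primitive `m`-th root of unity. -/
lemma sum_Icc_pow_primitiveRoot {K : Type*} [CommRing K] [IsDomain K] {m : ℕ} (hm : 1 < m)
    {η : K} (hη : IsPrimitiveRoot η m) :
    ∑ k ∈ Finset.Icc 1 (m - 1), η ^ k = -1 := by
  have h0 : ∑ i ∈ Finset.range m, η ^ i = 0 := hη.geom_sum_eq_zero hm
  have hm1 : m = (m - 1) + 1 := by omega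
  rw [hm1, Finset.sum_range_succ'] at h0
  have h2 : ∑ k ∈ Finset.Icc 1 (m - 1), η ^ k = ∑ i ∈ Finset.range (m - 1), η ^ (i + 1) := by
    rw [← Finset.Ico_add_one_right_eq_Icc, Finset.sum_Ico_eq_sum_range]
    simp only [Nat.add_sub_cancel]
    exact Finset.sum_congr rfl fun i _ => by rw [Nat.add_comm]
  rw [h2]
  simp only [pow_zero] at h0
  linear_combination h0

/-- Reduce the exponent `v.val` modulo `m` when `ε ^ m = 1`. -/
lemma pow_val_cast {K : Type*} [Monoid K] (ε : K) {m n : ℕ} [NeZero n] (hdvd : m ∣ n)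
    (hord : ε ^ m = 1) (v : ZMod n) :
    ε ^ v.val = ε ^ ((ZMod.castHom hdvd (ZMod m)) v).val := by
  have hm0 : m ≠ 0 := by
    rintro rfl
    exact (NeZero.ne n) (Nat.eq_zero_of_zero_dvd hdvd)
  haveI : NeZero m := ⟨hm0⟩
  have h1 : (ZMod.castHom hdvd (ZMod m)) v = ((v.val : ℕ) : ZMod m) := by
    rw [ZMod.castHom_apply, ZMod.natCast_val]
  rw [h1, ZMod.val_natCast]
  conv_lhs => rw [← Nat.div_add_mod v.val m]
  rw [pow_add, pow_mul, hord, one_pow, one_mul]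

lemma orderOf_dvd_sub_of_pow_eq {M : Type*} [MonoidWithZero M] [IsCancelMulZero M] {x : M} (hx : x ≠ 0)
    {s s' : ℕ} (hle : s ≤ s') (h : x ^ s = x ^ s') : orderOf x ∣ s' - s := by
  apply orderOf_dvd_of_pow_eq_one
  have h1 : x ^ s * x ^ (s' - s) = x ^ s * 1 := by
    rw [mul_one, ← pow_add, Nat.add_sub_cancel' hle]; exact h.symm
  exact (mul_left_cancel₀ (pow_ne_zero s hx) h1)

/-- Sum of `ε ^ (g^s * c).val` over a full period: `g` generates the nonzero elements. -/
lemma sum_pow_val_over_units {K : Type*} [CommRing K] [IsDomain K] {m : ℕ} (hm : m.Prime)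
    {ε : K} (hε : IsPrimitiveRoot ε m) (g' c : ZMod m) (hg : orderOf g' = m - 1) (hc : c ≠ 0) :
    ∑ s ∈ Finset.range (m - 1), ε ^ ((g' ^ s * c).val) = -1 := by
  haveI : Fact m.Prime := ⟨hm⟩
  have hm1 : 1 < m := hm.one_lt
  have hgfin : IsOfFinOrder g' := by
    rw [← orderOf_pos_iff, hg]; omega
  have hg0 : g' ≠ 0 := hgfin.isUnit.ne_zero
  haveI : NeZero m := ⟨hm.pos.ne'⟩
  -- injectivity
  have hinj : ∀ x ∈ Finset.range (m - 1), ∀ y ∈ Finset.range (m - 1),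
      g' ^ x * c = g' ^ y * c → x = y := by
    have key : ∀ x y : ℕ, x ≤ y → x < m - 1 → y < m - 1 → g' ^ x = g' ^ y → x = y := by
      intro x y hle hx hy hxy
      have hdvd := orderOf_dvd_sub_of_pow_eq hg0 hle hxy
      rw [hg] at hdvd
      rcases Nat.eq_zero_of_dvd_of_lt hdvd (by omega) with h
      omega
    intro x hx y hy hxy
    simp only [Finset.mem_range] at hx hy
    have hxy' : g' ^ x = g' ^ y := mul_right_cancel₀ hc hxy
    rcases le_total x y with h | h
    · exact key x y h hx hy hxy'
    · exact (key y x h hy hx hxy'.symm).symm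
  -- the image is the set of nonzero elements
  have himg : (Finset.range (m - 1)).image (fun s => g' ^ s * c) =
      Finset.univ \ {(0 : ZMod m)} := by
    apply Finset.eq_of_subset_of_card_le
    · intro x hx
      simp only [Finset.mem_image, Finset.mem_range] at hx
      obtain ⟨s, _, rfl⟩ := hx
      simp only [Finset.mem_sdiff, Finset.mem_univ, Finset.mem_singleton, true_and]
      exact mul_ne_zero (pow_ne_zero s hg0) hc
    · rw [Finset.card_sdiff_of_subset (Finset.subset_univ _), Finset.card_singleton,
        Finset.card_univ, ZMod.card, Finset.card_image_of_injOn
          (fun x hx y hy h => hinj x hx y hy h), Finset.card_range]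
  -- sum over all of ZMod m
  have hall : ∑ x : ZMod m, ε ^ x.val = ∑ j ∈ Finset.range m, ε ^ j := by
    refine Finset.sum_nbij' (fun x => x.val) (fun j => (j : ZMod m)) ?_ ?_ ?_ ?_ ?_
    · intro x _; exact Finset.mem_range.mpr (ZMod.val_lt x)
    · intro j _; exact Finset.mem_univ _
    · intro x _; exact ZMod.natCast_rightInverse x
    · intro j hj; exact ZMod.val_natCast_of_lt (Finset.mem_range.mp hj)
    · intro x _; rfl
  calc ∑ s ∈ Finset.range (m - 1), ε ^ ((g' ^ s * c).val)
      = ∑ x ∈ (Finset.range (m - 1)).image (fun s => g' ^ s * c), ε ^ x.val := by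
        rw [Finset.sum_image hinj]
    _ = ∑ x ∈ Finset.univ \ {(0 : ZMod m)}, ε ^ x.val := by rw [himg]
    _ = (∑ x : ZMod m, ε ^ x.val) - ε ^ (0 : ZMod m).val := by
        rw [Finset.sum_sdiff_eq_sub (Finset.subset_univ _), Finset.sum_singleton]
    _ = -1 := by
        rw [hall, hε.geom_sum_eq_zero hm1, ZMod.val_zero, pow_zero]
        ring

/-- The Whiteman generalized cyclotomic class `W_i = {g^s u^i mod n : 0 ≤ s ≤ e-1}`. -/
def whitemanClass (n e : ℕ) (g u : ZMod n) (i : ℕ) : Finset (ZMod n) :=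
  (Finset.range e).image (fun s => g ^ s * u ^ i)

/-- The value at `x` of the polynomial `∑_{i ∈ P ∪ W_a ∪ W_b ∪ W_c} x^i`, where
`P = {kn₁ : 1 ≤ k ≤ n₂-1}`.  With `(a,b,c) = (3,4,5)` this is `S(x)`, with `(1,2,3)`
it is `T(x)`, and with `(2,3,4)` it is `U(x)`. -/
def STUval {K : Type*} [Field K] (n₁ n₂ n e : ℕ) (g u : ZMod n) (a b c : ℕ) (x : K) : K :=
  (∑ k ∈ Finset.Icc 1 (n₂ - 1), x ^ (k * n₁)) +
    (∑ i ∈ whitemanClass n e g u a, x ^ i.val) +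
    (∑ i ∈ whitemanClass n e g u b, x ^ i.val) +
    (∑ i ∈ whitemanClass n e g u c, x ^ i.val)

/-- For `t ∈ P`, `S(β^t) = -(n₁+1)/2`, and for `t ∈ Q`, `S(β^t) = (n₂-1)/2`, in a field
of characteristic `p` with `p ∤ n`. -/
theorem Sval_at_P_and_Q {K : Type*} [Field K] (p : ℕ) [CharP K p]
    (n₁ n₂ n e : ℕ)
    (hp₁ : n₁.Prime) (hp₂ : n₂.Prime) (ho₁ : Odd n₁) (ho₂ : Odd n₂) (hne : n₁ ≠ n₂)
    (hn : n = n₁ * n₂) (hd : Nat.gcd (n₁ - 1) (n₂ - 1) = 6)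
    (he : e = (n₁ - 1) * (n₂ - 1) / 6)
    (g u : ℕ)
    (hg₁ : orderOf (g : ZMod n₁) = n₁ - 1) (hg₂ : orderOf (g : ZMod n₂) = n₂ - 1)
    (hu₁ : u ≡ g [MOD n₁]) (hu₂ : u ≡ 1 [MOD n₂])
    (β : K) (hβ : IsPrimitiveRoot β n) (hpn : ¬ p ∣ n) :
    (∀ k : ℕ, 1 ≤ k → k ≤ n₂ - 1 →
      STUval n₁ n₂ n e (g : ZMod n) (u : ZMod n) 3 4 5 (β ^ (k * n₁)) =
        -(((n₁ + 1) / 2 : ℕ) : K)) ∧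
    (∀ k : ℕ, 1 ≤ k → k ≤ n₁ - 1 →
      STUval n₁ n₂ n e (g : ZMod n) (u : ZMod n) 3 4 5 (β ^ (k * n₂)) =
        (((n₂ - 1) / 2 : ℕ) : K)) := by
  haveI F₁ : Fact n₁.Prime := ⟨hp₁⟩
  haveI F₂ : Fact n₂.Prime := ⟨hp₂⟩
  have hodd₁ : n₁ % 2 = 1 := Nat.odd_iff.mp ho₁
  have hodd₂ : n₂ % 2 = 1 := Nat.odd_iff.mp ho₂
  have h3₁ : 3 ≤ n₁ := by have := hp₁.two_le; omega
  have h3₂ : 3 ≤ n₂ := by have := hp₂.two_le; omega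
  obtain ⟨m₁, hm₁⟩ : 6 ∣ (n₁ - 1) := hd ▸ Nat.gcd_dvd_left _ _
  obtain ⟨m₂, hm₂⟩ : 6 ∣ (n₂ - 1) := hd ▸ Nat.gcd_dvd_right _ _
  have hn0 : n ≠ 0 := by rw [hn]; positivity
  haveI : NeZero n := ⟨hn0⟩
  have hd₁ : n₁ ∣ n := hn ▸ dvd_mul_right _ _
  have hd₂ : n₂ ∣ n := hn ▸ dvd_mul_left _ _
  have hcop : Nat.Coprime n₁ n₂ := (Nat.coprime_primes hp₁ hp₂).mpr hne
  have hu₁' : ((u : ℕ) : ZMod n₁) = ((g : ℕ) : ZMod n₁) :=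
    (ZMod.natCast_eq_natCast_iff _ _ _).mpr hu₁
  have hu₂' : ((u : ℕ) : ZMod n₂) = 1 := by
    have := (ZMod.natCast_eq_natCast_iff u 1 n₂).mpr hu₂
    simpa using this
  have hg0₁ : ((g : ℕ) : ZMod n₁) ≠ 0 := by
    have hfin : IsOfFinOrder ((g : ℕ) : ZMod n₁) := by
      rw [← orderOf_pos_iff, hg₁]; omega
    exact hfin.isUnit.ne_zero
  have hg0₂ : ((g : ℕ) : ZMod n₂) ≠ 0 := by
    have hfin : IsOfFinOrder ((g : ℕ) : ZMod n₂) := by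
      rw [← orderOf_pos_iff, hg₂]; omega
    exact hfin.isUnit.ne_zero
  have he₁ : e = m₁ * (n₂ - 1) := by
    rw [he, hm₁, mul_assoc, Nat.mul_div_cancel_left _ (by norm_num : 0 < 6)]
  have he₂ : e = m₂ * (n₁ - 1) := by
    rw [he, hm₂]
    have h : (n₁ - 1) * (6 * m₂) = 6 * (m₂ * (n₁ - 1)) := by ring
    rw [h, Nat.mul_div_cancel_left _ (by norm_num : 0 < 6)]
  -- injectivity of s ↦ g^s u^j on range e
  have hinj : ∀ (j : ℕ), ∀ x ∈ Finset.range e, ∀ y ∈ Finset.range e,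
      ((g : ℕ) : ZMod n) ^ x * ((u : ℕ) : ZMod n) ^ j
        = ((g : ℕ) : ZMod n) ^ y * ((u : ℕ) : ZMod n) ^ j → x = y := by
    have key : ∀ j x y : ℕ, x ≤ y → x < e → y < e →
        ((g : ℕ) : ZMod n) ^ x * ((u : ℕ) : ZMod n) ^ j
          = ((g : ℕ) : ZMod n) ^ y * ((u : ℕ) : ZMod n) ^ j → x = y := by
      intro j x y hle hx hy hxy
      have h₁ : ((g : ℕ) : ZMod n₁) ^ x = ((g : ℕ) : ZMod n₁) ^ y := by
        have h := congrArg (ZMod.castHom hd₁ (ZMod n₁)) hxy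
        simp only [map_mul, map_pow, map_natCast] at h
        exact mul_right_cancel₀ (pow_ne_zero j (hu₁' ▸ hg0₁)) h
      have h₂ : ((g : ℕ) : ZMod n₂) ^ x = ((g : ℕ) : ZMod n₂) ^ y := by
        have h := congrArg (ZMod.castHom hd₂ (ZMod n₂)) hxy
        simp only [map_mul, map_pow, map_natCast, hu₂', one_pow, mul_one] at h
        exact h
      have dv₁ : (n₁ - 1) ∣ (y - x) := hg₁ ▸ orderOf_dvd_sub_of_pow_eq hg0₁ hle h₁
      have dv₂ : (n₂ - 1) ∣ (y - x) := hg₂ ▸ orderOf_dvd_sub_of_pow_eq hg0₂ hle h₂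
      have dl : Nat.lcm (n₁ - 1) (n₂ - 1) ∣ (y - x) := Nat.lcm_dvd dv₁ dv₂
      have hlcm : Nat.lcm (n₁ - 1) (n₂ - 1) = e := by
        have h : Nat.lcm (n₁ - 1) (n₂ - 1)
            = (n₁ - 1) * (n₂ - 1) / Nat.gcd (n₁ - 1) (n₂ - 1) := rfl
        rw [h, hd, ← he]
      rw [hlcm] at dl
      rcases Nat.eq_zero_or_pos (y - x) with h0 | h0
      · omega
      · have := Nat.le_of_dvd h0 dl; omega
    intro j x hx y hy hxy
    simp only [Finset.mem_range] at hx hy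
    rcases le_total x y with h | h
    · exact key j x y h hx hy hxy
    · exact (key j y x h hy hx hxy.symm).symm
  -- master lemma for Whiteman class sums
  have hclass : ∀ (m : ℕ), m.Prime → ∀ (hdvd : m ∣ n) (ε : K), IsPrimitiveRoot ε m →
      ∀ (c : ZMod m), c ≠ 0 → ∀ (a j : ℕ), e = a * (m - 1) →
      orderOf ((g : ℕ) : ZMod m) = m - 1 →
      (∀ s : ℕ, (ZMod.castHom hdvd (ZMod m))
          (((g : ℕ) : ZMod n) ^ s * ((u : ℕ) : ZMod n) ^ j) = ((g : ℕ) : ZMod m) ^ s * c) →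
      ∑ i ∈ whitemanClass n e ((g : ℕ) : ZMod n) ((u : ℕ) : ZMod n) j, ε ^ i.val
        = -(a : K) := by
    intro m hm hdvd ε hε c hc a j hea hord hcast
    rw [whitemanClass, Finset.sum_image (hinj j)]
    have step1 : ∀ s ∈ Finset.range e,
        ε ^ (((g : ℕ) : ZMod n) ^ s * ((u : ℕ) : ZMod n) ^ j).val
          = ε ^ ((((g : ℕ) : ZMod m)) ^ s * c).val := by
      intro s _
      rw [pow_val_cast ε hdvd hε.pow_eq_one, hcast s]
    rw [Finset.sum_congr rfl step1, hea]
    have hper : ∀ s : ℕ, ε ^ ((((g : ℕ) : ZMod m)) ^ (s + (m - 1)) * c).val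
        = ε ^ ((((g : ℕ) : ZMod m)) ^ s * c).val := by
      intro s
      have h1 : (((g : ℕ) : ZMod m)) ^ (m - 1) = 1 := by
        rw [← hord]; exact pow_orderOf_eq_one _
      rw [pow_add, h1, mul_one]
    rw [sum_range_mul_of_periodic _ _ hper a,
      sum_pow_val_over_units hm hε _ c hord hc, nsmul_eq_mul]
    ring
  constructor
  · -- the P case : t = k * n₁
    intro k hk1 hk2
    have hδ : IsPrimitiveRoot (β ^ n₁) n₂ := hβ.pow (Nat.pos_of_ne_zero hn0) hn
    have hkcop : Nat.Coprime k n₂ := by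
      apply Nat.coprime_comm.mp
      apply hp₂.coprime_iff_not_dvd.mpr
      intro hdvd
      have := Nat.le_of_dvd (by omega) hdvd
      omega
    have hε : IsPrimitiveRoot ((β ^ n₁) ^ k) n₂ := hδ.pow_of_coprime k hkcop
    set ε : K := (β ^ n₁) ^ k with hεdef
    have hx : β ^ (k * n₁) = ε := by rw [mul_comm, pow_mul]
    -- the P-part sum
    have hP1 : ∑ k' ∈ Finset.Icc 1 (n₂ - 1), ε ^ (k' * n₁) = -1 := by
      have hη : IsPrimitiveRoot (ε ^ n₁) n₂ := hε.pow_of_coprime n₁ hcop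
      have hterm : ∀ k' ∈ Finset.Icc 1 (n₂ - 1), ε ^ (k' * n₁) = (ε ^ n₁) ^ k' := by
        intro k' _
        rw [mul_comm, pow_mul]
      rw [Finset.sum_congr rfl hterm]
      exact sum_Icc_pow_primitiveRoot (by omega) hη
    have hcast : ∀ j : ℕ, ∀ s : ℕ, (ZMod.castHom hd₂ (ZMod n₂))
        (((g : ℕ) : ZMod n) ^ s * ((u : ℕ) : ZMod n) ^ j)
          = ((g : ℕ) : ZMod n₂) ^ s * 1 := by
      intro j s
      simp only [map_mul, map_pow, map_natCast, hu₂', one_pow, mul_one]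
    have hC : ∀ j : ℕ,
        ∑ i ∈ whitemanClass n e ((g : ℕ) : ZMod n) ((u : ℕ) : ZMod n) j, ε ^ i.val
          = -(m₁ : K) := by
      intro j
      exact hclass n₂ hp₂ hd₂ ε hε 1 one_ne_zero m₁ j he₁ hg₂ (hcast j)
    rw [STUval, hx, hP1, hC 3, hC 4, hC 5]
    have harith : (n₁ + 1) / 2 = 3 * m₁ + 1 := by omega
    rw [harith]
    push_cast
    ring
  · -- the Q case : t = k * n₂
    intro k hk1 hk2
    have hδ : IsPrimitiveRoot (β ^ n₂) n₁ :=
      hβ.pow (Nat.pos_of_ne_zero hn0) (by rw [hn, mul_comm])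
    have hkcop : Nat.Coprime k n₁ := by
      apply Nat.coprime_comm.mp
      apply hp₁.coprime_iff_not_dvd.mpr
      intro hdvd
      have := Nat.le_of_dvd (by omega) hdvd
      omega
    have hε : IsPrimitiveRoot ((β ^ n₂) ^ k) n₁ := hδ.pow_of_coprime k hkcop
    set ε : K := (β ^ n₂) ^ k with hεdef
    have hx : β ^ (k * n₂) = ε := by rw [mul_comm, pow_mul]
    have hP1 : ∑ k' ∈ Finset.Icc 1 (n₂ - 1), ε ^ (k' * n₁) = ((n₂ - 1 : ℕ) : K) := by
      have hterm : ∀ k' ∈ Finset.Icc 1 (n₂ - 1), ε ^ (k' * n₁) = 1 := by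
        intro k' _
        rw [hεdef, ← pow_mul, ← pow_mul]
        have h : n₂ * (k * (k' * n₁)) = n * (k * k') := by rw [hn]; ring
        rw [h, pow_mul, hβ.pow_eq_one, one_pow]
      rw [Finset.sum_congr rfl hterm, Finset.sum_const, Nat.card_Icc]
      simp
    have hcast : ∀ j : ℕ, ∀ s : ℕ, (ZMod.castHom hd₁ (ZMod n₁))
        (((g : ℕ) : ZMod n) ^ s * ((u : ℕ) : ZMod n) ^ j)
          = ((g : ℕ) : ZMod n₁) ^ s * ((g : ℕ) : ZMod n₁) ^ j := by
      intro j s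
      simp only [map_mul, map_pow, map_natCast, hu₁']
    have hC : ∀ j : ℕ,
        ∑ i ∈ whitemanClass n e ((g : ℕ) : ZMod n) ((u : ℕ) : ZMod n) j, ε ^ i.val
          = -(m₂ : K) := by
      intro j
      exact hclass n₁ hp₁ hd₁ ε hε (((g : ℕ) : ZMod n₁) ^ j) (pow_ne_zero j hg0₁)
        m₂ j he₂ hg₁ (hcast j)
    rw [STUval, hx, hP1, hC 3, hC 4, hC 5]
    have harith2 : (n₂ - 1) / 2 = 3 * m₂ := by omega
    rw [harith2, hm₂]
    push_cast
    ring
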